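/- Let X be a Hilbert space, A, B nonempty closed convex subsets. Suppose there exist e ∈ A ∩ (B - v) (v the displacement vector) and a norm-one continuous linear functional x* with inf x*(B - v) = x*(e) = sup x*(A), and such that x* strongly exposes A at e. Then the couple (A,B) is regular. -/

import Mathlib

open Pointwise

/-- `p` is the metric projection of `x` onto the set `C`. -/
def IsProjPt {X : Type*} [NormedAddCommGroup X] (C : Set X) (x p : X) : Prop :=
  p ∈ C ∧ ∀ y ∈ C, dist x p ≤ dist x y

set_option maxHeartbeats 1000000 in
theorem stmt9 {X : Type*} [NormedAddCommGroup X] [InnerProductSpace ℝ X] [CompleteSpace X]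
    (A B : Set X) (hAne : A.Nonempty) (hBne : B.Nonempty)
    (hAc : IsClosed A) (hBc : IsClosed B) (hAconv : Convex ℝ A) (hBconv : Convex ℝ B)
    (v : X) (hv : IsProjPt (closure (B - A)) 0 v)
    (E : Set X)
    (hE : E = {a ∈ A | Metric.infDist a B = ⨅ a' : A, Metric.infDist (a' : X) B})
    (e : X) (he : e ∈ A ∩ ((· - v) '' B))
    (f : X →L[ℝ] ℝ) (hf : ‖f‖ = 1)
    (hinf : ∀ b ∈ (· - v) '' B, f e ≤ f b) (hsup : ∀ a ∈ A, f a ≤ f e)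
    (hexp : ∀ x : ℕ → X, (∀ n, x n ∈ A) →
      Filter.Tendsto (fun n => f (x n)) Filter.atTop (nhds (f e)) →
      Filter.Tendsto x Filter.atTop (nhds e)) :
    ∀ ε > (0 : ℝ), ∃ δ > (0 : ℝ), ∀ x : X,
      max (Metric.infDist x A) (Metric.infDist x ((· - v) '' B)) ≤ δ →
        Metric.infDist x E ≤ ε := by
  haveI : Nonempty A := hAne.to_subtype
  -- key: ‖v‖ is a lower bound of norms on B - A
  have hvmin : ∀ y ∈ B - A, ‖v‖ ≤ ‖y‖ := by
    intro y hy
    have h := hv.2 y (subset_closure hy)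
    simpa [dist_zero_left] using h
  -- e ∈ E
  have heE : e ∈ E := by
    rw [hE]
    refine ⟨he.1, le_antisymm ?_ ?_⟩
    · refine le_ciInf fun a => ?_
      have h1 : Metric.infDist e B ≤ ‖v‖ := by
        obtain ⟨b, hb, hbe⟩ := he.2
        have hd : dist e b = ‖v‖ := by
          rw [dist_eq_norm, ← hbe]
          simp
        rw [← hd]
        exact Metric.infDist_le_dist_of_mem hb
      refine h1.trans (le_of_not_gt fun hlt => ?_)
      obtain ⟨b, hb, hdb⟩ := (Metric.infDist_lt_iff hBne).1 hlt
      have h2 : ‖v‖ ≤ ‖b - (a : X)‖ := hvmin _ (Set.sub_mem_sub hb a.2)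
      rw [dist_eq_norm, ← norm_neg] at hdb
      simp only [neg_sub] at hdb
      linarith
    · have hbdd : BddBelow (Set.range fun a' : A => Metric.infDist (a' : X) B) := by
        refine ⟨0, ?_⟩
        rintro r ⟨a, rfl⟩
        exact Metric.infDist_nonneg
      exact ciInf_le hbdd ⟨e, he.1⟩
  intro ε hε
  by_contra hcon
  push_neg at hcon
  choose x hx1 hx2 using fun n : ℕ => hcon (1 / ((n : ℝ) + 1)) (by positivity)
  have hBv : ((· - v) '' B).Nonempty := hBne.image _
  have hstep : ∀ n : ℕ, (1 : ℝ) / ((n : ℝ) + 1) < 2 / ((n : ℝ) + 1) := by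
    intro n
    gcongr
    norm_num
  have ha : ∀ n : ℕ, ∃ a ∈ A, dist (x n) a < 2 / ((n : ℝ) + 1) := fun n =>
    (Metric.infDist_lt_iff hAne).1
      (lt_of_le_of_lt ((le_max_left _ _).trans (hx1 n)) (hstep n))
  have hb : ∀ n : ℕ, ∃ b ∈ (· - v) '' B, dist (x n) b < 2 / ((n : ℝ) + 1) := fun n =>
    (Metric.infDist_lt_iff hBv).1
      (lt_of_le_of_lt ((le_max_right _ _).trans (hx1 n)) (hstep n))
  choose a haA haD using ha
  choose b hbB hbD using hb
  -- f (a n) → f e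
  have hfa : ∀ n : ℕ, dist (f (a n)) (f e) ≤ 4 / ((n : ℝ) + 1) := by
    intro n
    have h1 : f (a n) ≤ f e := hsup _ (haA n)
    have h2 : f e ≤ f (b n) := hinf _ (hbB n)
    have h3 : f (b n) - f (a n) ≤ ‖b n - a n‖ := by
      calc f (b n) - f (a n) = f (b n - a n) := by rw [map_sub]
        _ ≤ ‖f (b n - a n)‖ := le_abs_self _
        _ ≤ ‖f‖ * ‖b n - a n‖ := f.le_opNorm _
        _ = ‖b n - a n‖ := by rw [hf, one_mul]
    have h4 : ‖b n - a n‖ ≤ 4 / ((n : ℝ) + 1) := by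
      have t1 := dist_triangle (b n) (x n) (a n)
      have t2 : dist (b n) (x n) = dist (x n) (b n) := dist_comm _ _
      have := haD n
      have := hbD n
      rw [← dist_eq_norm]
      have : (2 : ℝ) / ((n : ℝ) + 1) + 2 / ((n : ℝ) + 1) = 4 / ((n : ℝ) + 1) := by ring
      calc dist (b n) (a n) ≤ dist (b n) (x n) + dist (x n) (a n) := t1
        _ ≤ 2 / ((n : ℝ) + 1) + 2 / ((n : ℝ) + 1) := by
            rw [t2]; exact add_le_add (hbD n).le (haD n).le
        _ = 4 / ((n : ℝ) + 1) := by ring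
    rw [Real.dist_eq, abs_sub_comm, abs_of_nonneg (sub_nonneg.2 h1)]
    linarith
  have hlim4 : Filter.Tendsto (fun n : ℕ => 4 / ((n : ℝ) + 1)) Filter.atTop (nhds 0) := by
    have := tendsto_one_div_add_atTop_nhds_zero_nat.const_mul (4 : ℝ)
    simpa [mul_one_div, mul_zero, div_eq_mul_inv] using this
  have hfatend : Filter.Tendsto (fun n => f (a n)) Filter.atTop (nhds (f e)) := by
    rw [tendsto_iff_dist_tendsto_zero]
    exact squeeze_zero (fun n => dist_nonneg) hfa hlim4
  have hae : Filter.Tendsto a Filter.atTop (nhds e) := hexp a haA hfatend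
  have haedist : Filter.Tendsto (fun n => dist (a n) e) Filter.atTop (nhds 0) :=
    tendsto_iff_dist_tendsto_zero.1 hae
  -- x n → e
  have hxe : Filter.Tendsto (fun n => dist (x n) e) Filter.atTop (nhds 0) := by
    have hbound : ∀ n : ℕ, dist (x n) e ≤ 2 / ((n : ℝ) + 1) + dist (a n) e := fun n =>
      (dist_triangle (x n) (a n) e).trans (add_le_add (haD n).le le_rfl)
    have hlim2 : Filter.Tendsto (fun n : ℕ => 2 / ((n : ℝ) + 1) + dist (a n) e)
        Filter.atTop (nhds 0) := by
      have h2 : Filter.Tendsto (fun n : ℕ => 2 / ((n : ℝ) + 1)) Filter.atTop (nhds 0) := by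
        have := tendsto_one_div_add_atTop_nhds_zero_nat.const_mul (2 : ℝ)
        simpa [mul_one_div, mul_zero, div_eq_mul_inv] using this
      simpa using h2.add haedist
    exact squeeze_zero (fun n => dist_nonneg) hbound hlim2
  -- contradiction
  have hev : ∀ᶠ n in Filter.atTop, dist (x n) e < ε := hxe.eventually (gt_mem_nhds hε)
  obtain ⟨n, hn⟩ := hev.exists
  have hle : Metric.infDist (x n) E ≤ dist (x n) e := Metric.infDist_le_dist_of_mem heE
  linarith [hx2 n]
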